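/- Let r' : {(x,y) : x > 0} × ℝ → ℝ³ be defined by r'(x,y) = ( (1/√3)(e^y/sinh(√3 x))(sinh²(√3 x) + 3y), −(1/√3) e^{−2y} coth(√3 x), −(1/√3) e^y / sinh(√3 x) ). Then each component of r' satisfies, for all x > 0 and y ∈ ℝ, the vector Laplace equation ∂²r'/∂x² + ∂²r'/∂y² = (6/sinh²(√3 x) + 4) · r'(x,y). -/

import Mathlib

/-- Real hyperbolic cotangent. -/
noncomputable def coth (x : ℝ) : ℝ := Real.cosh x / Real.sinh x

/-- The isothermal parametrization of Hildebrand's case-1 affine sphere. -/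
noncomputable def r' (x y : ℝ) : Fin 3 → ℝ :=
  ![ (1 / Real.sqrt 3) * (Real.exp y / Real.sinh (Real.sqrt 3 * x)) *
       ((Real.sinh (Real.sqrt 3 * x)) ^ 2 + 3 * y),
     -(1 / Real.sqrt 3) * Real.exp (-2 * y) * coth (Real.sqrt 3 * x),
     -(1 / Real.sqrt 3) * Real.exp y / Real.sinh (Real.sqrt 3 * x) ]

open Real Filter

private lemma hds (a t : ℝ) :
    HasDerivAt (fun u => Real.sinh (a * u)) (a * Real.cosh (a * t)) t := by
  simpa [mul_comm, Function.comp_def] using (Real.hasDerivAt_sinh (a * t)).comp t ((hasDerivAt_id t).const_mul a)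

private lemma hdc (a t : ℝ) :
    HasDerivAt (fun u => Real.cosh (a * u)) (a * Real.sinh (a * t)) t := by
  simpa [mul_comm, Function.comp_def] using (Real.hasDerivAt_cosh (a * t)).comp t ((hasDerivAt_id t).const_mul a)

private lemma hde (t : ℝ) :
    HasDerivAt (fun s : ℝ => Real.exp (-2 * s)) (-2 * Real.exp (-2 * t)) t := by
  simpa [mul_comm] using ((hasDerivAt_id t).const_mul (-2 : ℝ)).exp

private lemma comp2 (a x y : ℝ) (hx : 0 < x) (ha3 : a ^ 2 = 3) (ha0 : 0 < a) :
    deriv (deriv fun s => -(1 / a) * Real.exp y / Real.sinh (a * s)) x +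
      deriv (deriv fun s => -(1 / a) * Real.exp s / Real.sinh (a * x)) y =
    (6 / (Real.sinh (a * x)) ^ 2 + 4) * (-(1 / a) * Real.exp y / Real.sinh (a * x)) := by
  have hane : a ≠ 0 := ne_of_gt ha0
  have hu : ∀ t : ℝ, 0 < t → Real.sinh (a * t) ≠ 0 := fun t ht =>
    Real.sinh_ne_zero.mpr (ne_of_gt (mul_pos ha0 ht))
  have hux := hu x hx
  have hc2 : Real.cosh (a * x) ^ 2 = Real.sinh (a * x) ^ 2 + 1 := Real.cosh_sq _
  have hf : ∀ t, 0 < t → HasDerivAt (fun s => -(1 / a) * Real.exp y / Real.sinh (a * s))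
      (Real.exp y * Real.cosh (a * t) / (Real.sinh (a * t)) ^ 2) t := by
    intro t ht
    have h1 := (hasDerivAt_const t (-(1 / a) * Real.exp y)).div (hds a t) (hu t ht)
    refine h1.congr_deriv (Eq.symm ?_)
    field_simp
    ring
  have hD1 : deriv (fun s => -(1 / a) * Real.exp y / Real.sinh (a * s)) =ᶠ[nhds x]
      (fun t => Real.exp y * Real.cosh (a * t) / (Real.sinh (a * t)) ^ 2) := by
    filter_upwards [Ioi_mem_nhds hx] with t ht
    exact (hf t ht).deriv
  have h2 : HasDerivAt (fun t => Real.exp y * Real.cosh (a * t) / (Real.sinh (a * t)) ^ 2)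
      (a * Real.exp y * (-(Real.sinh (a * x) ^ 2) - 2) /
        Real.sinh (a * x) ^ 3) x := by
    have h3 := (((hdc a x).const_mul (Real.exp y)).div ((hds a x).pow 2)
      (pow_ne_zero 2 hux))
    refine h3.congr_deriv (Eq.symm ?_)
    simp only [Pi.pow_apply]
    field_simp
    linear_combination (2 * Real.sinh (a * x)) * hc2
  have hxx : deriv (deriv fun s => -(1 / a) * Real.exp y / Real.sinh (a * s)) x
      = a * Real.exp y * (-(Real.sinh (a * x) ^ 2) - 2) /
        Real.sinh (a * x) ^ 3 := by
    rw [hD1.deriv_eq, h2.deriv]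
  have hg : ∀ s : ℝ, HasDerivAt (fun s => -(1 / a) * Real.exp s / Real.sinh (a * x))
      (-(1 / a) * Real.exp s / Real.sinh (a * x)) s := fun s =>
    ((Real.hasDerivAt_exp s).const_mul (-(1 / a))).div_const _
  have hgy : deriv (fun s => -(1 / a) * Real.exp s / Real.sinh (a * x))
      = fun s => -(1 / a) * Real.exp s / Real.sinh (a * x) := funext fun s => (hg s).deriv
  have hyy : deriv (deriv fun s => -(1 / a) * Real.exp s / Real.sinh (a * x)) y
      = -(1 / a) * Real.exp y / Real.sinh (a * x) := by
    rw [hgy, (hg y).deriv]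
  rw [hxx, hyy]
  field_simp
  linear_combination (-2 - Real.sinh (a * x) ^ 2) * ha3

private lemma comp1 (a x y : ℝ) (hx : 0 < x) (ha3 : a ^ 2 = 3) (ha0 : 0 < a) :
    deriv (deriv fun s => -(1 / a) * Real.exp (-2 * y) * coth (a * s)) x +
      deriv (deriv fun s => -(1 / a) * Real.exp (-2 * s) * coth (a * x)) y =
    (6 / (Real.sinh (a * x)) ^ 2 + 4) * (-(1 / a) * Real.exp (-2 * y) * coth (a * x)) := by
  simp only [coth]
  have hane : a ≠ 0 := ne_of_gt ha0
  have hu : ∀ t : ℝ, 0 < t → Real.sinh (a * t) ≠ 0 := fun t ht =>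
    Real.sinh_ne_zero.mpr (ne_of_gt (mul_pos ha0 ht))
  have hux := hu x hx
  have hf : ∀ t, 0 < t →
      HasDerivAt (fun s => -(1 / a) * Real.exp (-2 * y) * (Real.cosh (a * s) / Real.sinh (a * s)))
        (Real.exp (-2 * y) / Real.sinh (a * t) ^ 2) t := by
    intro t ht
    have hct : Real.cosh (a * t) ^ 2 = Real.sinh (a * t) ^ 2 + 1 := Real.cosh_sq _
    have h1 := ((hdc a t).div (hds a t) (hu t ht)).const_mul (-(1 / a) * Real.exp (-2 * y))
    refine h1.congr_deriv (Eq.symm ?_)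
    set E := Real.exp (-2 * y) with hE
    field_simp
    linear_combination (-E) * hct
  have hD1 : deriv (fun s => -(1 / a) * Real.exp (-2 * y) * (Real.cosh (a * s) / Real.sinh (a * s)))
      =ᶠ[nhds x] (fun t => Real.exp (-2 * y) / Real.sinh (a * t) ^ 2) := by
    filter_upwards [Ioi_mem_nhds hx] with t ht
    exact (hf t ht).deriv
  have h2 : HasDerivAt (fun t => Real.exp (-2 * y) / Real.sinh (a * t) ^ 2)
      (-(2 * a * Real.exp (-2 * y) * Real.cosh (a * x)) / Real.sinh (a * x) ^ 3) x := by
    have h3 := (hasDerivAt_const x (Real.exp (-2 * y))).div ((hds a x).pow 2) (pow_ne_zero 2 hux)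
    refine h3.congr_deriv (Eq.symm ?_)
    simp only [Pi.pow_apply]
    field_simp
    ring
  have hxx : deriv (deriv fun s =>
        -(1 / a) * Real.exp (-2 * y) * (Real.cosh (a * s) / Real.sinh (a * s))) x
      = -(2 * a * Real.exp (-2 * y) * Real.cosh (a * x)) / Real.sinh (a * x) ^ 3 := by
    rw [hD1.deriv_eq, h2.deriv]
  have hg : ∀ s : ℝ,
      HasDerivAt (fun s => -(1 / a) * Real.exp (-2 * s) * (Real.cosh (a * x) / Real.sinh (a * x)))
        (2 / a * Real.exp (-2 * s) * (Real.cosh (a * x) / Real.sinh (a * x))) s := by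
    intro s
    have h1 := ((hde s).const_mul (-(1 / a))).mul_const (Real.cosh (a * x) / Real.sinh (a * x))
    refine h1.congr_deriv (Eq.symm ?_)
    ring
  have hgy : deriv (fun s => -(1 / a) * Real.exp (-2 * s) * (Real.cosh (a * x) / Real.sinh (a * x)))
      = fun s => 2 / a * Real.exp (-2 * s) * (Real.cosh (a * x) / Real.sinh (a * x)) :=
    funext fun s => (hg s).deriv
  have hg2 : HasDerivAt (fun s => 2 / a * Real.exp (-2 * s) * (Real.cosh (a * x) / Real.sinh (a * x)))
      (-(4 / a) * Real.exp (-2 * y) * (Real.cosh (a * x) / Real.sinh (a * x))) y := by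
    have h1 := ((hde y).const_mul (2 / a)).mul_const (Real.cosh (a * x) / Real.sinh (a * x))
    refine h1.congr_deriv (Eq.symm ?_)
    ring
  have hyy : deriv (deriv fun s =>
        -(1 / a) * Real.exp (-2 * s) * (Real.cosh (a * x) / Real.sinh (a * x))) y
      = -(4 / a) * Real.exp (-2 * y) * (Real.cosh (a * x) / Real.sinh (a * x)) := by
    rw [hgy, hg2.deriv]
  rw [hxx, hyy]
  set E := Real.exp (-2 * y) with hE
  field_simp
  linear_combination (-2 * E) * ha3

private lemma comp0 (a x y : ℝ) (hx : 0 < x) (ha3 : a ^ 2 = 3) (ha0 : 0 < a) :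
    deriv (deriv fun s => 1 / a * (Real.exp y / Real.sinh (a * s)) *
        ((Real.sinh (a * s)) ^ 2 + 3 * y)) x +
      deriv (deriv fun s => 1 / a * (Real.exp s / Real.sinh (a * x)) *
        ((Real.sinh (a * x)) ^ 2 + 3 * s)) y =
    (6 / (Real.sinh (a * x)) ^ 2 + 4) *
      (1 / a * (Real.exp y / Real.sinh (a * x)) * ((Real.sinh (a * x)) ^ 2 + 3 * y)) := by
  have hane : a ≠ 0 := ne_of_gt ha0
  have hu : ∀ t : ℝ, 0 < t → Real.sinh (a * t) ≠ 0 := fun t ht =>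
    Real.sinh_ne_zero.mpr (ne_of_gt (mul_pos ha0 ht))
  have hux := hu x hx
  have hc2 : Real.cosh (a * x) ^ 2 = Real.sinh (a * x) ^ 2 + 1 := Real.cosh_sq _
  have hf : ∀ t, 0 < t →
      HasDerivAt (fun s => 1 / a * (Real.exp y / Real.sinh (a * s)) *
          ((Real.sinh (a * s)) ^ 2 + 3 * y))
        (Real.exp y / a * (a * Real.cosh (a * t)) * (1 - 3 * y / Real.sinh (a * t) ^ 2)) t := by
    intro t ht
    have h1 := (hasDerivAt_const t (Real.exp y)).div (hds a t) (hu t ht)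
    have h2 := (h1.const_mul (1 / a)).mul (((hds a t).pow 2).add_const (3 * y))
    refine h2.congr_deriv (Eq.symm ?_)
    simp only [Pi.pow_apply, Pi.div_apply]
    field_simp
    ring
  have hD1 : deriv (fun s => 1 / a * (Real.exp y / Real.sinh (a * s)) *
        ((Real.sinh (a * s)) ^ 2 + 3 * y))
      =ᶠ[nhds x] (fun t => Real.exp y / a * (a * Real.cosh (a * t)) *
        (1 - 3 * y / Real.sinh (a * t) ^ 2)) := by
    filter_upwards [Ioi_mem_nhds hx] with t ht
    exact (hf t ht).deriv
  have h2 : HasDerivAt (fun t => Real.exp y / a * (a * Real.cosh (a * t)) *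
        (1 - 3 * y / Real.sinh (a * t) ^ 2))
      (Real.exp y / a * a ^ 2 * (Real.sinh (a * x) + 3 * y / Real.sinh (a * x)
        + 6 * y / Real.sinh (a * x) ^ 3)) x := by
    have p1 := ((hdc a x).const_mul a).const_mul (Real.exp y / a)
    have p2 := ((hasDerivAt_const x (3 * y)).div ((hds a x).pow 2)
      (pow_ne_zero 2 hux)).const_sub 1
    refine (p1.mul p2).congr_deriv (Eq.symm ?_)
    simp only [Pi.pow_apply, Pi.div_apply]
    field_simp
    linear_combination (-(6 * a * Real.sinh (a * x) * y)) * hc2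
  have hxx : deriv (deriv fun s => 1 / a * (Real.exp y / Real.sinh (a * s)) *
        ((Real.sinh (a * s)) ^ 2 + 3 * y)) x
      = Real.exp y / a * a ^ 2 * (Real.sinh (a * x) + 3 * y / Real.sinh (a * x)
        + 6 * y / Real.sinh (a * x) ^ 3) := by
    rw [hD1.deriv_eq, h2.deriv]
  have hg : ∀ s : ℝ,
      HasDerivAt (fun s => 1 / a * (Real.exp s / Real.sinh (a * x)) *
          ((Real.sinh (a * x)) ^ 2 + 3 * s))
        (1 / a * (Real.exp s / Real.sinh (a * x)) * ((Real.sinh (a * x)) ^ 2 + 3 * s + 3)) s := by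
    intro s
    have h1 := ((Real.hasDerivAt_exp s).div_const (Real.sinh (a * x))).const_mul (1 / a)
    have h2 : HasDerivAt (fun s : ℝ => (Real.sinh (a * x)) ^ 2 + 3 * s) 3 s := by
      simpa using ((hasDerivAt_id s).const_mul 3).const_add ((Real.sinh (a * x)) ^ 2)
    refine (h1.mul h2).congr_deriv (Eq.symm ?_)
    ring
  have hgy : deriv (fun s => 1 / a * (Real.exp s / Real.sinh (a * x)) *
        ((Real.sinh (a * x)) ^ 2 + 3 * s))
      = fun s => 1 / a * (Real.exp s / Real.sinh (a * x)) * ((Real.sinh (a * x)) ^ 2 + 3 * s + 3) :=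
    funext fun s => (hg s).deriv
  have hg2 : HasDerivAt (fun s => 1 / a * (Real.exp s / Real.sinh (a * x)) *
        ((Real.sinh (a * x)) ^ 2 + 3 * s + 3))
      (1 / a * (Real.exp y / Real.sinh (a * x)) * ((Real.sinh (a * x)) ^ 2 + 3 * y + 6)) y := by
    have h1 := ((Real.hasDerivAt_exp y).div_const (Real.sinh (a * x))).const_mul (1 / a)
    have h2 : HasDerivAt (fun s : ℝ => (Real.sinh (a * x)) ^ 2 + 3 * s + 3) 3 y := by
      simpa using ((((hasDerivAt_id y).const_mul 3).const_add
        ((Real.sinh (a * x)) ^ 2)).add_const 3)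
    refine (h1.mul h2).congr_deriv (Eq.symm ?_)
    ring
  have hyy : deriv (deriv fun s => 1 / a * (Real.exp s / Real.sinh (a * x)) *
        ((Real.sinh (a * x)) ^ 2 + 3 * s)) y
      = 1 / a * (Real.exp y / Real.sinh (a * x)) * ((Real.sinh (a * x)) ^ 2 + 3 * y + 6) := by
    rw [hgy, hg2.deriv]
  rw [hxx, hyy]
  set E := Real.exp y with hE
  field_simp
  linear_combination (3 * E * Real.sinh (a * x) ^ 2 * y + E * Real.sinh (a * x) ^ 4 + 6 * E * y) * ha3

/-- Each component of `r'` satisfies the affine-sphere equation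
`Δ r' = (6/sinh²(√3 x) + 4) r'`. -/
theorem affine_sphere_laplace_case1 :
    ∀ x : ℝ, 0 < x → ∀ y : ℝ, ∀ i : Fin 3,
      deriv (deriv fun s => r' s y i) x + deriv (deriv fun s => r' x s i) y
        = (6 / (Real.sinh (Real.sqrt 3 * x)) ^ 2 + 4) * r' x y i := by
  intro x hx y i
  have ha3 : (Real.sqrt 3) ^ 2 = 3 := Real.sq_sqrt (by norm_num)
  have ha0 : (0:ℝ) < Real.sqrt 3 := Real.sqrt_pos.mpr (by norm_num)
  fin_cases i
  · simpa only [r', Fin.zero_eta, Matrix.cons_val_zero] using comp0 (Real.sqrt 3) x y hx ha3 ha0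
  · simpa only [r', Fin.mk_one, Matrix.cons_val_one, Matrix.head_cons, Matrix.cons_val_zero] using
      comp1 (Real.sqrt 3) x y hx ha3 ha0
  · simpa only [r', Fin.reduceFinMk, Matrix.cons_val_two, Matrix.tail_cons, Matrix.head_cons] using
      comp2 (Real.sqrt 3) x y hx ha3 ha0
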